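/- The circulant graphs C_48(1, 2, 23) and C_48(2, 11, 13) are isomorphic as simple graphs, but there is no unit x modulo 48 whose reflexive modular reduction of x·{1,2,23} equals {2,11,13}; hence they are isomorphic circulant graphs that are not Adam (Type-1) isomorphic. -/

import Mathlib

/-- Reflexive modular reduction of `r` modulo `n`: `min (r mod n, n - r mod n)`. -/
def reflRed (n : ℕ) (r : ℤ) : ℤ := min (r % (n : ℤ)) ((n : ℤ) - r % (n : ℤ))

/-- Reflexive reduction of the set `x • R` modulo `n`. -/
def reflRedSet (n : ℕ) (x : ℤ) (R : Finset ℤ) : Finset ℤ :=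
  R.image (fun r => reflRed n (x * r))

/-- The circulant graph `C_n(S)` on `ZMod n`. -/
def circulant (n : ℕ) (S : Finset ℤ) : SimpleGraph (ZMod n) where
  Adj a b := a ≠ b ∧ ∃ s ∈ S, a - b = (s : ZMod n) ∨ a - b = -(s : ZMod n)
  symm := by
    refine ⟨?_⟩
    rintro a b ⟨hab, s, hs, h⟩
    refine ⟨hab.symm, s, hs, ?_⟩
    have hba : b - a = -(a - b) := (neg_sub a b).symm
    rcases h with h | h
    · right; rw [hba, h]
    · left; rw [hba, h, neg_neg]
  loopless := by refine ⟨?_⟩; rintro a ⟨h, -⟩; exact h rfl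

instance (n : ℕ) (S : Finset ℤ) : DecidableRel (circulant n S).Adj :=
  fun a b => inferInstanceAs (Decidable (a ≠ b ∧ ∃ s ∈ S, a - b = (s : ZMod n) ∨ a - b = -(s : ZMod n)))

def myF : ZMod 48 → ZMod 48 := fun x => if x.val % 2 = 0 then x else x + 12
def myG : ZMod 48 → ZMod 48 := fun x => if x.val % 2 = 0 then x else x - 12

def myEquiv : ZMod 48 ≃ ZMod 48 := ⟨myF, myG, by decide, by decide⟩

lemma reflRed_congr (a b : ℤ) (h : a % 48 = b % 48) : reflRed 48 a = reflRed 48 b := by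
  unfold reflRed; push_cast; rw [h]

theorem stmt4 :
    Nonempty (circulant 48 ({1, 2, 23} : Finset ℤ) ≃g circulant 48 ({2, 11, 13} : Finset ℤ)) ∧
    ¬ ∃ x : ℤ, Int.gcd x 48 = 1 ∧ reflRedSet 48 x ({1, 2, 23} : Finset ℤ) = {2, 11, 13} := by
  constructor
  · have h : ∀ a b : ZMod 48, (circulant 48 {2, 11, 13}).Adj (myEquiv a) (myEquiv b) ↔ (circulant 48 {1, 2, 23}).Adj a b := by decide
    exact ⟨{ toEquiv := myEquiv, map_rel_iff' := @fun a b => h a b }⟩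
  · rintro ⟨x, hg, hs⟩
    set y : ℕ := (x % 48).toNat with hy
    have h0 : (0:ℤ) ≤ x % 48 := Int.emod_nonneg x (by norm_num)
    have hyx : (y : ℤ) = x % 48 := Int.toNat_of_nonneg h0
    have hlt : y < 48 := by
      have := Int.emod_lt_of_pos x (show (0:ℤ) < 48 by norm_num)
      omega
    have hsets : reflRedSet 48 (y : ℤ) ({1, 2, 23} : Finset ℤ) = reflRedSet 48 x ({1, 2, 23} : Finset ℤ) := by
      unfold reflRedSet
      apply Finset.image_congr
      intro r _
      apply reflRed_congr
      rw [hyx]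
      conv_lhs => rw [Int.mul_emod, Int.emod_emod_of_dvd x dvd_rfl]
      rw [← Int.mul_emod]
    have hgy : Nat.gcd y 48 = 1 := by
      have hc : IsCoprime x (48:ℤ) := Int.isCoprime_iff_gcd_eq_one.mpr hg
      have hc2 : IsCoprime (x % 48) (48:ℤ) := by
        have := hc.add_mul_left_left (-(x / 48))
        rwa [show x + 48 * -(x / 48) = x % 48 by rw [Int.emod_def]; ring] at this
      have : Int.gcd (y : ℤ) 48 = 1 := by
        rw [hyx]; exact Int.isCoprime_iff_gcd_eq_one.mp hc2
      rw [← Int.gcd_natCast_natCast]; exact this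
    have : ∀ z ∈ Finset.range 48, ¬ (Nat.gcd z 48 = 1 ∧ reflRedSet 48 (z : ℤ) ({1, 2, 23} : Finset ℤ) = {2, 11, 13}) := by decide
    exact this y (Finset.mem_range.mpr hlt) ⟨hgy, hsets.trans hs⟩
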